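/- For s ∈ (0,1) and z > 0, ∫₀^∞ (1 - e^{-z²/(4t)}) / t^{1-s} dt = (Γ(1-s)/s) · (z²/4)^s. -/

import Mathlib

open Real MeasureTheory Set Filter

lemma one_sub_exp_neg_le (x : ℝ) : 1 - Real.exp (-x) ≤ x := by
  have := Real.add_one_le_exp (-x); linarith

lemma one_sub_exp_neg_nonneg {x : ℝ} (hx : 0 ≤ x) : 0 ≤ 1 - Real.exp (-x) := by
  have : Real.exp (-x) ≤ 1 := Real.exp_le_one_iff.mpr (by linarith)
  linarith

/-- the substitution identity -/
lemma rpow_subst {s c : ℝ} {x : ℝ} (hx : 0 < x) :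
    x ^ ((-1 : ℝ) - 1) * ((x ^ (-1 : ℝ)) ^ (s - 2) * Real.exp (-(c / x ^ (-1 : ℝ))))
      = x ^ (-s) * Real.exp (-(c * x)) := by
  have h1 : c / x⁻¹ = c * x := by field_simp
  rw [Real.rpow_neg_one, Real.inv_rpow hx.le, ← Real.rpow_neg hx.le, h1, ← mul_assoc, ← Real.rpow_add hx,
    show (-1 : ℝ) - 1 + -(s - 2) = -s by ring]

lemma integrableOn_aux {s c : ℝ} (hs1 : s < 1) (hc : 0 < c) :
    IntegrableOn (fun t : ℝ => t ^ (s - 2) * Real.exp (-(c / t))) (Set.Ioi 0) := by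
  have h1 : IntegrableOn (fun x : ℝ => x ^ (-s) * Real.exp (-(c * x))) (Set.Ioi 0) := by
    have := integrableOn_rpow_mul_exp_neg_mul_rpow (s := -s) (p := 1) (b := c)
      (by linarith) one_pos hc
    simpa [Real.rpow_one, neg_mul] using this
  refine (integrableOn_Ioi_comp_rpow_iff'
    (fun t : ℝ => t ^ (s - 2) * Real.exp (-(c / t))) (p := (-1 : ℝ)) (by norm_num)).mp ?_
  refine h1.congr_fun (fun x hx => ?_) measurableSet_Ioi
  simp only [smul_eq_mul]
  exact (rpow_subst hx).symm

lemma integral_aux {s c : ℝ} (hs0 : 0 < s) (hs1 : s < 1) (hc : 0 < c) :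
    ∫ t in Set.Ioi (0:ℝ), t ^ (s - 2) * Real.exp (-(c / t))
      = Real.Gamma (1 - s) * c ^ (s - 1) := by
  have h := integral_comp_rpow_Ioi (fun t : ℝ => t ^ (s - 2) * Real.exp (-(c / t)))
    (p := (-1 : ℝ)) (by norm_num)
  rw [← h]
  have h2 : ∫ x in Set.Ioi (0:ℝ), x ^ (-s) * Real.exp (-(c * x))
      = Real.Gamma (1 - s) * c ^ (s - 1) := by
    have := Real.integral_rpow_mul_exp_neg_mul_Ioi (a := 1 - s) (r := c) (by linarith) hc
    rw [show (1 : ℝ) - s - 1 = -s by ring] at this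
    rw [this, one_div, ← Real.rpow_neg_one, ← Real.rpow_mul hc.le,
      show (-1 : ℝ) * (1 - s) = s - 1 by ring, mul_comm]
  rw [← h2]
  refine setIntegral_congr_fun measurableSet_Ioi (fun x hx => ?_)
  have hx : (0:ℝ) < x := hx
  rw [smul_eq_mul, abs_neg, abs_one, one_mul]
  exact rpow_subst hx

/-- For `s ∈ (0,1)` and `z > 0`,
`∫₀^∞ (1 - e^{-z²/(4t)}) / t^(1-s) dt = (Γ(1-s)/s) · (z²/4)^s`. -/
theorem integral_one_sub_exp_div_rpow (s z : ℝ) (hs0 : 0 < s) (hs1 : s < 1) (hz : 0 < z) :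
    ∫ t in Set.Ioi (0 : ℝ), (1 - Real.exp (-(z ^ 2 / (4 * t)))) / t ^ (1 - s)
      = (Real.Gamma (1 - s) / s) * (z ^ 2 / 4) ^ s := by
  set c : ℝ := z ^ 2 / 4 with hc_def
  have hc : 0 < c := by positivity
  -- continuity of the main integrand on (0, ∞)
  have hcont : ContinuousOn (fun t : ℝ => (1 - Real.exp (-(c / t))) * t ^ (s - 1))
      (Set.Ioi 0) := by
    apply ContinuousOn.mul
    · exact continuousOn_const.sub (Real.continuous_exp.comp_continuousOn
        ((continuousOn_const.div continuousOn_id (fun t ht => ne_of_gt ht)).neg))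
    · exact fun t ht => (Real.continuousAt_rpow_const t (s - 1)
        (Or.inl (ne_of_gt ht))).continuousWithinAt
  -- integrability of u * v'
  have hint_uv' : IntegrableOn (fun t : ℝ => (1 - Real.exp (-(c / t))) * t ^ (s - 1))
      (Set.Ioi 0) := by
    rw [← Set.Ioc_union_Ioi_eq_Ioi (zero_le_one : (0:ℝ) ≤ 1)]
    apply IntegrableOn.union
    · have hg : IntegrableOn (fun t : ℝ => t ^ (s - 1)) (Set.Ioc 0 1) := by
        have := intervalIntegral.intervalIntegrable_rpow' (a := 0) (b := 1) (r := s - 1)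
          (by linarith)
        rwa [intervalIntegrable_iff_integrableOn_Ioc_of_le zero_le_one] at this
      refine hg.mono' ((hcont.mono Set.Ioc_subset_Ioi_self).aestronglyMeasurable
        measurableSet_Ioc) ?_
      filter_upwards [ae_restrict_mem measurableSet_Ioc] with t ht
      have ht0 : 0 < t := ht.1
      have hnn : 0 ≤ 1 - Real.exp (-(c / t)) := one_sub_exp_neg_nonneg (by positivity)
      rw [Real.norm_eq_abs, abs_of_nonneg (mul_nonneg hnn (Real.rpow_nonneg ht0.le _))]
      exact mul_le_of_le_one_left (Real.rpow_nonneg ht0.le _)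
        (by linarith [Real.exp_nonneg (-(c / t))])
    · have hg2 : IntegrableOn (fun t : ℝ => c * t ^ (s - 2)) (Set.Ioi 1) :=
        (integrableOn_Ioi_rpow_of_lt (by linarith) one_pos).const_mul c
      refine hg2.mono' ((hcont.mono (Set.Ioi_subset_Ioi zero_le_one)).aestronglyMeasurable
        measurableSet_Ioi) ?_
      filter_upwards [ae_restrict_mem measurableSet_Ioi] with t ht
      have ht0 : (0:ℝ) < t := lt_trans one_pos ht
      have hnn : 0 ≤ 1 - Real.exp (-(c / t)) := one_sub_exp_neg_nonneg (by positivity)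
      rw [Real.norm_eq_abs, abs_of_nonneg (mul_nonneg hnn (Real.rpow_nonneg ht0.le _))]
      calc (1 - Real.exp (-(c / t))) * t ^ (s - 1)
          ≤ (c / t) * t ^ (s - 1) :=
            mul_le_mul_of_nonneg_right (one_sub_exp_neg_le _) (Real.rpow_nonneg ht0.le _)
        _ = c * t ^ (s - 2) := by
            rw [show s - 2 = (s - 1) + (-1) by ring, Real.rpow_add ht0, Real.rpow_neg_one]
            ring
  -- derivatives
  have hu : ∀ t ∈ Set.Ioi (0:ℝ), HasDerivAt (fun t => 1 - Real.exp (-(c / t)))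
      (-(Real.exp (-(c / t)) * (c / t ^ 2))) t := by
    intro t ht
    have ht0 : (0:ℝ) < t := ht
    have h1 : HasDerivAt (fun t : ℝ => -(c / t)) (c / t ^ 2) t := by
      have h := ((hasDerivAt_inv ht0.ne').const_mul c).neg
      have heq : (fun x : ℝ => -(c * x⁻¹)) = fun x : ℝ => -(c / x) := by
        funext x; rw [div_eq_mul_inv]
      replace h : HasDerivAt (fun x : ℝ => -(c * x⁻¹)) _ t := h
      rw [heq] at h
      convert h using 1
      ring
    have h2 := (Real.hasDerivAt_exp (-(c / t))).comp t h1
    simpa [mul_comm] using h2.const_sub 1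
  have hv : ∀ t ∈ Set.Ioi (0:ℝ), HasDerivAt (fun t : ℝ => t ^ s / s) (t ^ (s - 1)) t := by
    intro t ht
    have := (Real.hasDerivAt_rpow_const (p := s) (Or.inl (ne_of_gt ht))).div_const s
    convert this using 1
    · rfl
    · rfl
    exact (mul_div_cancel_left₀ _ hs0.ne').symm
  -- pointwise identity for u' * v
  have hptw : ∀ t ∈ Set.Ioi (0:ℝ), -(c / s) * (t ^ (s - 2) * Real.exp (-(c / t)))
      = (-(Real.exp (-(c / t)) * (c / t ^ 2))) * (t ^ s / s) := by
    intro t ht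
    have ht0 : (0:ℝ) < t := ht
    have h2 : t ^ (s - 2) = t ^ s / t ^ 2 := by
      rw [show s - 2 = s - ((2:ℕ):ℝ) by norm_num, Real.rpow_sub ht0, Real.rpow_natCast]
    rw [h2]
    field_simp
  have haux : IntegrableOn (fun t : ℝ => -(c / s) * (t ^ (s - 2) * Real.exp (-(c / t))))
      (Set.Ioi 0) := (integrableOn_aux hs1 hc).const_mul (-(c / s))
  have hint_u'v : IntegrableOn
      (fun t : ℝ => (-(Real.exp (-(c / t)) * (c / t ^ 2))) * (t ^ s / s)) (Set.Ioi 0) :=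
    haux.congr_fun hptw measurableSet_Ioi
  -- limits
  have h_zero : Tendsto (fun t => (1 - Real.exp (-(c / t))) * (t ^ s / s))
      (nhdsWithin 0 (Set.Ioi 0)) (nhds 0) := by
    have hg : Tendsto (fun t : ℝ => t ^ s / s) (nhdsWithin 0 (Set.Ioi 0)) (nhds 0) := by
      have h1 : ContinuousAt (fun t : ℝ => t ^ s) 0 :=
        Real.continuousAt_rpow_const 0 s (Or.inr hs0.le)
      have h2 : Tendsto (fun t : ℝ => t ^ s) (nhdsWithin 0 (Set.Ioi 0)) (nhds ((0:ℝ) ^ s)) :=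
        h1.tendsto.mono_left nhdsWithin_le_nhds
      have := h2.div_const s
      rwa [Real.zero_rpow hs0.ne', zero_div] at this
    apply squeeze_zero' ?_ ?_ hg
    · filter_upwards [self_mem_nhdsWithin] with t (ht : (0:ℝ) < t)
      exact mul_nonneg (one_sub_exp_neg_nonneg (by positivity)) (by positivity)
    · filter_upwards [self_mem_nhdsWithin] with t (ht : (0:ℝ) < t)
      exact mul_le_of_le_one_left (by positivity)
        (by linarith [Real.exp_nonneg (-(c / t))])
  have h_infty : Tendsto (fun t => (1 - Real.exp (-(c / t))) * (t ^ s / s)) atTop (nhds 0) := by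
    have hg : Tendsto (fun t : ℝ => c / s * t ^ (s - 1)) atTop (nhds 0) := by
      have := (tendsto_rpow_neg_atTop (y := 1 - s) (by linarith)).const_mul (c / s)
      simpa [show -(1 - s) = s - 1 by ring] using this
    apply squeeze_zero' ?_ ?_ hg
    · filter_upwards [eventually_gt_atTop 0] with t ht
      exact mul_nonneg (one_sub_exp_neg_nonneg (by positivity)) (by positivity)
    · filter_upwards [eventually_gt_atTop 0] with t ht
      calc (1 - Real.exp (-(c / t))) * (t ^ s / s)
          ≤ (c / t) * (t ^ s / s) :=
            mul_le_mul_of_nonneg_right (one_sub_exp_neg_le _) (by positivity)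
        _ = c / s * t ^ (s - 1) := by
            rw [show s - 1 = s + (-1) by ring, Real.rpow_add ht, Real.rpow_neg_one]
            ring
  -- integration by parts
  have IBP := integral_Ioi_mul_deriv_eq_deriv_mul (a := 0)
    (u := fun t => 1 - Real.exp (-(c / t))) (u' := fun t => -(Real.exp (-(c / t)) * (c / t ^ 2)))
    (v := fun t : ℝ => t ^ s / s) (v' := fun t : ℝ => t ^ (s - 1)) hu hv hint_uv' hint_u'v
    h_zero h_infty
  have hI : ∫ t in Set.Ioi (0:ℝ), (-(Real.exp (-(c / t)) * (c / t ^ 2))) * (t ^ s / s)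
      = -(c / s) * (Real.Gamma (1 - s) * c ^ (s - 1)) := by
    rw [← setIntegral_congr_fun measurableSet_Ioi hptw, MeasureTheory.integral_const_mul,
      integral_aux hs0 hs1 hc]
  have hLHS : ∫ t in Set.Ioi (0:ℝ), (1 - Real.exp (-(z ^ 2 / (4 * t)))) / t ^ (1 - s)
      = ∫ t in Set.Ioi (0:ℝ), (1 - Real.exp (-(c / t))) * t ^ (s - 1) := by
    refine setIntegral_congr_fun measurableSet_Ioi (fun t ht => ?_)
    have ht0 : (0:ℝ) < t := ht
    rw [← div_div, ← hc_def, div_eq_mul_inv, ← Real.rpow_neg ht0.le,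
      show -(1 - s) = s - 1 by ring]
  rw [hLHS]
  rw [show (∫ t in Set.Ioi (0:ℝ), (1 - Real.exp (-(c / t))) * t ^ (s - 1)) =
    (0 : ℝ) - 0 - ∫ t in Set.Ioi (0:ℝ),
      (-(Real.exp (-(c / t)) * (c / t ^ 2))) * (t ^ s / s) from IBP, hI]
  have hcs : c ^ s = c ^ (s - 1) * c := by
    rw [← Real.rpow_add_one hc.ne']
    ring_nf
  rw [hcs]
  field_simp
  ring
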